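/- Let φ, ψ : [0;1] → [0;1]² be continuous paths with φ(0) = (0,0), φ(1) = (1,1), ψ(0) = (0,1) and ψ(1) = (1,0). Then the curves range(φ) and range(ψ) intersect, i.e. there exist s, t ∈ [0;1] with φ(s) = ψ(t). -/

import Mathlib

noncomputable section

abbrev Plane := EuclideanSpace ℝ (Fin 2)

def pt (a b : ℝ) : Plane := !₂[a, b]

def unitSquare : Set Plane := {z | z 0 ∈ Set.Icc (0:ℝ) 1 ∧ z 1 ∈ Set.Icc (0:ℝ) 1}

structure Track where
  k : ℕ
  s : ℕ → ℝ
  x : ℕ → Plane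
  mono : ∀ i < k, s i < s (i + 1)
  ne : ∀ i < k, x i ≠ x (i + 1)

def Track.seg (p : Track) (t : ℝ) : ℕ := sSup {i | i < p.k ∧ p.s i ≤ t}

def Track.path (p : Track) (t : ℝ) : Plane :=
  p.x (p.seg t) + ((t - p.s (p.seg t)) / (p.s (p.seg t + 1) - p.s (p.seg t))) •
    (p.x (p.seg t + 1) - p.x (p.seg t))

def Track.rangeSet (p : Track) : Set Plane := p.path '' Set.Icc (p.s 0) (p.s p.k)

def Track.V (p : Track) : Set Plane := {z | ∃ i ≤ p.k, z = p.x i}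

def line (x y : Plane) : Set Plane := (affineSpan ℝ {x, y} : Set Plane)

def Track.L (p : Track) : Set Plane := {z | ∃ i < p.k, z ∈ line (p.x i) (p.x (i + 1))}

def Track.Lbar (p : Track) : Set Plane :=
  {z | ∃ i ≤ p.k, ∃ j ≤ p.k, p.x i ≠ p.x j ∧ z ∈ line (p.x i) (p.x j)}

def IsSegSet (S : Set Plane) : Prop := ∃ x y : Plane, x ≠ y ∧ S = segment ℝ x y

def NoCommonSegment (p q : Track) : Prop :=
  ¬ ∃ S : Set Plane, IsSegSet S ∧ S ⊆ p.rangeSet ∧ S ⊆ q.rangeSet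

def WSep (p q : Track) : Prop := p.V ∩ q.L = ∅ ∧ q.V ∩ p.L = ∅

def IsInter (p q : Track) (s t : ℝ) : Prop :=
  p.s 0 < s ∧ s < p.s p.k ∧ q.s 0 < t ∧ t < q.s q.k ∧ p.path s = q.path t

def Admissible (p q : Track) (x : Plane) (δ : ℝ) : Prop :=
  0 < δ ∧ ∀ v ∈ p.V ∪ q.V, v ∈ Metric.ball x δ → v = x

def entryParam (p : Track) (s δ : ℝ) (x : Plane) : ℝ :=
  sInf {s' | s' < s ∧ p.path '' Set.Icc s' s ⊆ Metric.ball x δ}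

def exitParam (p : Track) (s δ : ℝ) (x : Plane) : ℝ :=
  sSup {s' | s < s' ∧ p.path '' Set.Icc s s' ⊆ Metric.ball x δ}

def Alternates (x : Plane) (δ : ℝ) (a b c d : Plane) : Prop :=
  c ∈ Metric.sphere x δ \ {a, b} ∧ d ∈ Metric.sphere x δ \ {a, b} ∧
  connectedComponentIn (Metric.sphere x δ \ {a, b}) c ≠
    connectedComponentIn (Metric.sphere x δ \ {a, b}) d

def CrossAt (p q : Track) (s t δ : ℝ) : Prop :=
  Alternates (p.path s) δ
    (p.path (entryParam p s δ (p.path s))) (p.path (exitParam p s δ (p.path s)))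
    (q.path (entryParam q t δ (p.path s))) (q.path (exitParam q t δ (p.path s)))

def IsCrossing (p q : Track) (s t : ℝ) : Prop :=
  IsInter p q s t ∧ ∃ δ : ℝ, Admissible p q (p.path s) δ ∧ CrossAt p q s t δ

def CN (p q : Track) : ℕ := {st : ℝ × ℝ | IsCrossing p q st.1 st.2}.ncard

def par (p q : Track) : ℕ := CN p q % 2

def ds (A B : Set Plane) : ℝ := sInf {r | ∃ a ∈ A, ∃ b ∈ B, r = ‖a - b‖}

def alphaIJ (f g : ℝ → Plane) (aI bI aJ bJ : ℝ) : ℝ :=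
  min (ds {f aI, f bI} (g '' Set.Icc aJ bJ)) (ds {g aJ, g bJ} (f '' Set.Icc aI bI))

def IsModulus2 (f g : ℝ → Plane) (md : ℕ → ℕ) : Prop :=
  Monotone md ∧ ∀ n : ℕ, ∀ t ∈ Set.Icc (-1:ℝ) 2, ∀ t' ∈ Set.Icc (-1:ℝ) 2,
    |t - t'| < (2:ℝ) ^ (-(md n : ℤ)) →
    ‖f t - f t'‖ < (2:ℝ) ^ (-(n : ℤ)) ∧ ‖g t - g t'‖ < (2:ℝ) ^ (-(n : ℤ))

def IsApprox (f : ℝ → Plane) (md : ℕ → ℕ) (a b : ℝ) (n : ℕ) (p : Track) : Prop :=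
  p.s 0 = a ∧ p.s p.k = b ∧
  (∀ i < p.k, p.s (i + 1) - p.s i < (2:ℝ) ^ (-(md n : ℤ))) ∧
  (∀ i ≤ p.k, ‖f (p.s i) - p.x i‖ < (2:ℝ) ^ (-(n : ℤ)))

def ParityIs (f g : ℝ → Plane) (md : ℕ → ℕ) (aI bI aJ bJ : ℝ) (b : ℕ) : Prop :=
  ∀ n : ℕ, (2:ℝ) ^ (-(n : ℤ)) < alphaIJ f g aI bI aJ bJ / 16 →
    ∀ p q : Track, IsApprox f md aI bI n p → IsApprox g md aJ bJ n q → WSep p q →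
      par p q = b

def IsModulus1 (f : ℝ → Plane) (md : ℕ → ℕ) : Prop :=
  Monotone md ∧ ∀ n : ℕ, ∀ t ∈ Set.Icc (-1:ℝ) 2, ∀ t' ∈ Set.Icc (-1:ℝ) 2,
    |t - t'| < (2:ℝ) ^ (-(md n : ℤ)) → ‖f t - f t'‖ < (2:ℝ) ^ (-(n : ℤ))

def nbhdU (A : Set Plane) (δ : ℝ) : Set Plane := {x | ∃ y ∈ A, ‖x - y‖ < δ}

def extF (φ : ℝ → Plane) (t : ℝ) : Plane :=
  if t ≤ 0 then pt t 0 else if t ≤ 1 then φ t else pt t 1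

def extG (ψ : ℝ → Plane) (t : ℝ) : Plane :=
  if t ≤ 0 then pt t 1 else if t ≤ 1 then ψ t else pt t 0

set_option maxHeartbeats 2000000

section AuxWinding
open Set Complex

def cl (t : ℝ) : ℝ := max 0 (min t 1)

lemma cl_mem (t : ℝ) : cl t ∈ Icc (0:ℝ) 1 := by
  constructor
  · exact le_max_left _ _
  · simp [cl]

lemma cl_of_mem {t : ℝ} (h : t ∈ Icc (0:ℝ) 1) : cl t = t := by
  simp only [cl, min_eq_left h.2, max_eq_right h.1]

lemma cl_cl (t : ℝ) : cl (cl t) = cl t := cl_of_mem (cl_mem t)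

lemma continuous_cl : Continuous cl := by
  unfold cl; fun_prop

lemma re_pos_of_close {a b : ℂ} (ha : a ≠ 0) (h : ‖b - a‖ < ‖a‖) :
    0 < (b / a).re := by
  have h1 : ‖b / a - 1‖ < 1 := by
    have : b / a - 1 = (b - a) / a := by field_simp
    rw [this, norm_div, div_lt_one (norm_pos_iff.mpr ha)]
    exact h
  have h2 : |(b / a - 1).re| ≤ ‖b / a - 1‖ := Complex.abs_re_le_norm _
  have h3 : (b / a - 1).re = (b / a).re - 1 := by simp
  rw [h3] at h2
  have := abs_le.mp h2
  linarith [this.1]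

lemma exp_arg_mul_I {z : ℂ} (hz : z ≠ 0) :
    Complex.exp ((Complex.arg z) * I) = z / ‖z‖ := by
  rw [eq_div_iff (by simpa using hz), mul_comm]
  exact Complex.norm_mul_exp_arg_mul_I z

lemma lift_step {z w : ℂ} {θ : ℝ} (hz : z ≠ 0) (hw : w ≠ 0)
    (hlift : z = (‖z‖ : ℂ) * Complex.exp (θ * I)) :
    w = (‖w‖ : ℂ) * Complex.exp ((θ + Complex.arg (w / z)) * I) := by
  have hq : w / z ≠ 0 := div_ne_zero hw hz
  have haz : (‖z‖ : ℂ) ≠ 0 := by simpa using hz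
  have haw : (‖w‖ : ℂ) ≠ 0 := by simpa using hw
  have hexp : Complex.exp ((θ + Complex.arg (w / z)) * I)
      = Complex.exp (θ * I) * Complex.exp ((Complex.arg (w/z)) * I) := by
    rw [← Complex.exp_add]; ring_nf
  have hez : Complex.exp (θ * I) = z / ‖z‖ := by
    rw [eq_div_iff haz, mul_comm]; exact hlift.symm
  rw [hexp, hez, exp_arg_mul_I hq, norm_div]
  push_cast
  field_simp

/-- Existence of a continuous argument lift along [0,1]. -/
lemma exists_lift (γ : ℝ → ℂ) (hc : Continuous γ) (h0 : ∀ t, γ t ≠ 0) :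
    ∃ θ : ℝ → ℝ, Continuous θ ∧
      ∀ t ∈ Icc (0:ℝ) 1, γ t = (‖γ t‖ : ℂ) * Complex.exp ((θ t) * I) := by
  -- minimum modulus on [0,1]
  obtain ⟨t₀, ht₀, hmin⟩ := isCompact_Icc.exists_isMinOn (nonempty_Icc.mpr zero_le_one)
    ((continuous_norm.comp hc).continuousOn (s := Icc (0:ℝ) 1))
  set m := ‖γ t₀‖ with hm
  have hmpos : 0 < m := norm_pos_iff.mpr (h0 t₀)
  -- uniform continuity
  have huc := isCompact_Icc.uniformContinuousOn_of_continuous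
    (hc.continuousOn (s := Icc (0:ℝ) 1))
  rw [Metric.uniformContinuousOn_iff] at huc
  obtain ⟨δ, hδ, hδ'⟩ := huc m hmpos
  obtain ⟨n, hn⟩ := exists_nat_one_div_lt hδ
  set N : ℕ := n + 1 with hN
  have hNpos : (0:ℝ) < N := by rw [hN]; push_cast; positivity
  have hNδ : 1 / (N:ℝ) < δ := by
    push_cast; push_cast at hn; rw [hN]; exact_mod_cast hn
  -- key : for a b in a common subinterval of length 1/N inside [0,1]
  have key : ∀ a b : ℝ, a ∈ Icc (0:ℝ) 1 → b ∈ Icc (0:ℝ) 1 → |a - b| ≤ 1 / N →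
      ‖γ a - γ b‖ < ‖γ b‖ := by
    intro a b ha hb hab
    have h1 : dist (γ a) (γ b) < m := by
      apply hδ' a ha b hb
      rw [Real.dist_eq]
      exact lt_of_le_of_lt hab hNδ
    have h2 : m ≤ ‖γ b‖ := by simpa using hmin hb
    rw [Complex.dist_eq] at h1
    linarith
  -- induction on k: lift on [0, k/N]
  have main : ∀ k : ℕ, k ≤ N → ∃ θ : ℝ → ℝ, Continuous θ ∧
      ∀ t ∈ Icc (0:ℝ) ((k:ℝ)/N), γ t = (‖γ t‖ : ℂ) * Complex.exp ((θ t) * I) := by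
    intro k hk
    induction k with
    | zero =>
      refine ⟨fun _ => Complex.arg (γ 0), continuous_const, ?_⟩
      intro t ht
      have : t = 0 := le_antisymm (by simpa using ht.2) ht.1
      subst this
      exact (Complex.norm_mul_exp_arg_mul_I (γ 0)).symm
    | succ k ih =>
      obtain ⟨θ, hθc, hθ⟩ := ih (le_of_lt (Nat.lt_of_succ_le hk))
      set a : ℝ := (k:ℝ)/N with ha
      set b : ℝ := ((k:ℝ)+1)/N with hb
      have hamem : a ∈ Icc (0:ℝ) 1 := by
        constructor
        · positivity
        · rw [div_le_one hNpos]
          have : (k:ℝ) ≤ (N:ℝ) := by exact_mod_cast le_of_lt (Nat.lt_of_succ_le hk)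
          linarith
      have hbmem : b ∈ Icc (0:ℝ) 1 := by
        constructor
        · positivity
        · rw [div_le_one hNpos]
          exact_mod_cast hk
      have hab : a ≤ b := by
        rw [ha, hb, div_le_div_iff_of_pos_right hNpos]; linarith
      have hba : b - a = 1 / N := by
        rw [ha, hb, div_sub_div_same]; ring_nf
      -- clamp to [a,b]
      set c : ℝ → ℝ := fun t => max a (min t b) with hcdef
      have hc_mem : ∀ t, c t ∈ Icc a b := by
        intro t
        constructor
        · exact le_max_left _ _
        · simp only [hcdef, max_le_iff]
          exact ⟨hab, min_le_right _ _⟩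
      have hc_mem' : ∀ t, c t ∈ Icc (0:ℝ) 1 := fun t =>
        ⟨le_trans hamem.1 (hc_mem t).1, le_trans (hc_mem t).2 hbmem.2⟩
      have hc_close : ∀ t, ‖γ (c t) - γ a‖ < ‖γ a‖ := by
        intro t
        apply key _ _ (hc_mem' t) hamem
        have h1 := (hc_mem t).1
        have h2 := (hc_mem t).2
        rw [abs_le]
        constructor <;> linarith
      have hre : ∀ t, 0 < ((γ (c t)) / (γ a)).re := fun t =>
        re_pos_of_close (h0 a) (hc_close t)
      refine ⟨fun t => if t ≤ a then θ t else θ a + Complex.arg (γ (c t) / γ a), ?_, ?_⟩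
      · apply Continuous.if_le hθc ?_ continuous_id continuous_const
        · intro x hx
          simp only [id_eq] at hx
          rw [hx]
          have hca : c a = a := by
            simp only [hcdef]
            rw [min_eq_left hab, max_self]
          rw [hca, div_self (h0 a), Complex.arg_one, add_zero]
        · apply Continuous.add continuous_const
          have hcont : Continuous fun t => γ (c t) / γ a :=
            (hc.comp (by fun_prop)).div_const _
          rw [continuous_iff_continuousAt]
          intro t
          exact ContinuousAt.comp (g := Complex.arg)
            (Complex.continuousAt_arg (Or.inl (hre t))) hcont.continuousAt
      · intro t ht
        by_cases hta : t ≤ a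
        · simp only [if_pos hta]
          exact hθ t ⟨ht.1, hta⟩
        · simp only [if_neg hta]
          push_neg at hta
          have htb : t ≤ b := by
            rw [hb]
            have := ht.2
            push_cast at this ⊢
            convert this using 2 <;> rw [hN] <;> push_cast <;> ring
          have hct : c t = t := by
            simp only [hcdef]
            rw [min_eq_left htb, max_eq_right (le_of_lt hta)]
          have hθa := hθ a ⟨hamem.1, le_refl a⟩
          have key2 := lift_step (h0 a) (h0 t) hθa
          rw [hct]
          push_cast
          exact key2
  obtain ⟨θ, hθc, hθ⟩ := main N le_rfl
  refine ⟨θ, hθc, ?_⟩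
  intro t ht
  apply hθ
  rwa [div_self (ne_of_gt hNpos)]

/-- winding of a function over [0,1] -/
def Wind (γ : ℝ → ℂ) (w : ℝ) : Prop :=
  ∃ θ : ℝ → ℝ, Continuous θ ∧
    (∀ t ∈ Icc (0:ℝ) 1, γ t = (‖γ t‖ : ℂ) * Complex.exp ((θ t) * I)) ∧
    w = θ 1 - θ 0

lemma exp_eq_of_lift {γ : ℝ → ℂ} {θ : ℝ → ℝ} {t : ℝ} (h0 : γ t ≠ 0)
    (h : γ t = (‖γ t‖ : ℂ) * Complex.exp ((θ t) * I)) :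
    Complex.exp ((θ t) * I) = γ t / ‖γ t‖ := by
  rw [eq_div_iff (by simpa using h0), mul_comm]
  exact h.symm

/-- two-pi-integer valued differences -/
lemma diff_two_pi {x y : ℝ} (h : Complex.exp ((x:ℂ) * I) = Complex.exp ((y:ℂ) * I)) :
    ∃ k : ℤ, x - y = 2 * Real.pi * k := by
  have h1 : Complex.exp (((x:ℂ) - y) * I) = 1 := by
    rw [sub_mul, Complex.exp_sub, h, div_self (Complex.exp_ne_zero _)]
  rw [Complex.exp_eq_one_iff] at h1
  obtain ⟨k, hk⟩ := h1
  refine ⟨k, ?_⟩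
  have hI : ((x:ℂ) - y) * I = ((k:ℝ) * (2 * Real.pi) : ℝ) * I := by
    rw [hk]; push_cast; ring
  have := mul_right_cancel₀ Complex.I_ne_zero hI
  have h2 : (x:ℝ) - y = (k:ℝ) * (2 * Real.pi) := by exact_mod_cast this
  linarith

lemma two_pi_int_eq {j k : ℤ} (h : 2 * Real.pi * j + Real.pi ≠ 2 * Real.pi * k ∨ True) :
    True := trivial

lemma wind_unique {γ : ℝ → ℂ} {w w' : ℝ} (h0 : ∀ t ∈ Icc (0:ℝ) 1, γ t ≠ 0)
    (h : Wind γ w) (h' : Wind γ w') : w = w' := by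
  obtain ⟨θ₁, hc₁, hl₁, hw₁⟩ := h
  obtain ⟨θ₂, hc₂, hl₂, hw₂⟩ := h'
  have hd : ∀ t ∈ Icc (0:ℝ) 1, ∃ k : ℤ, θ₁ t - θ₂ t = 2 * Real.pi * k := by
    intro t ht
    apply diff_two_pi
    rw [exp_eq_of_lift (h0 t ht) (hl₁ t ht), exp_eq_of_lift (h0 t ht) (hl₂ t ht)]
  have hdc : Continuous (fun t => θ₁ t - θ₂ t) := hc₁.sub hc₂
  obtain ⟨k₀, hk₀⟩ := hd 0 ⟨le_refl 0, zero_le_one⟩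
  obtain ⟨k₁, hk₁⟩ := hd 1 ⟨zero_le_one, le_refl 1⟩
  have hpi : 0 < Real.pi := Real.pi_pos
  have hmain : θ₁ 0 - θ₂ 0 = θ₁ 1 - θ₂ 1 := by
    by_contra hne
    have hex : ∃ s ∈ Icc (0:ℝ) 1, ∃ j : ℤ, θ₁ s - θ₂ s = 2 * Real.pi * j + Real.pi := by
      rcases lt_or_gt_of_ne hne with hlt | hgt
      · have hkk : k₀ < k₁ := by
          by_contra hh
          push_neg at hh
          have : (k₁:ℝ) ≤ k₀ := by exact_mod_cast hh
          rw [hk₀, hk₁] at hlt; nlinarith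
        have hcast : (k₀:ℝ) + 1 ≤ k₁ := by exact_mod_cast hkk
        have hmem : 2 * Real.pi * k₀ + Real.pi ∈
            Icc (θ₁ 0 - θ₂ 0) (θ₁ 1 - θ₂ 1) := by
          constructor
          · rw [hk₀]; nlinarith
          · rw [hk₁]; nlinarith
        obtain ⟨s, hs, hds⟩ := intermediate_value_Icc zero_le_one hdc.continuousOn hmem
        exact ⟨s, hs, k₀, hds⟩
      · have hkk : k₁ < k₀ := by
          by_contra hh
          push_neg at hh
          have : (k₀:ℝ) ≤ k₁ := by exact_mod_cast hh
          rw [hk₀, hk₁] at hgt; nlinarith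
        have hcast : (k₁:ℝ) + 1 ≤ k₀ := by exact_mod_cast hkk
        have hmem : 2 * Real.pi * k₁ + Real.pi ∈
            Icc (θ₁ 1 - θ₂ 1) (θ₁ 0 - θ₂ 0) := by
          constructor
          · rw [hk₁]; nlinarith
          · rw [hk₀]; nlinarith
        obtain ⟨s, hs, hds⟩ := intermediate_value_Icc' zero_le_one hdc.continuousOn hmem
        exact ⟨s, hs, k₁, hds⟩
    obtain ⟨s, hs, j, hds⟩ := hex
    obtain ⟨ks, hks⟩ := hd s hs
    rw [hks] at hds
    have : (2:ℝ) * ks = 2 * j + 1 := by nlinarith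
    have : (2 * ks : ℤ) = 2 * j + 1 := by exact_mod_cast this
    omega
  rw [hw₁, hw₂]
  linarith

lemma wind_exists (γ : ℝ → ℂ) (hc : Continuous γ) (h0 : ∀ t, γ t ≠ 0) :
    ∃ w, Wind γ w := by
  obtain ⟨θ, hθc, hθ⟩ := exists_lift γ hc h0
  exact ⟨θ 1 - θ 0, θ, hθc, hθ, rfl⟩

lemma wind_congr {γ γ' : ℝ → ℂ} {w : ℝ}
    (hγc : Continuous γ) (hγ'c : Continuous γ')
    (h0 : ∀ t, γ t ≠ 0) (h0' : ∀ t, γ' t ≠ 0)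
    (hloop : γ 0 = γ 1) (hloop' : γ' 0 = γ' 1)
    (hclose : ∀ t ∈ Icc (0:ℝ) 1, ‖γ' t - γ t‖ < ‖γ t‖)
    (h : Wind γ w) : Wind γ' w := by
  obtain ⟨θ, hθc, hθ, hw⟩ := h
  have hre : ∀ t, 0 < ((γ' (cl t)) / (γ (cl t))).re := fun t =>
    re_pos_of_close (h0 _) (hclose _ (cl_mem t))
  refine ⟨fun t => θ t + Complex.arg (γ' (cl t) / γ (cl t)), ?_, ?_, ?_⟩
  · apply hθc.add
    have hcont : Continuous fun t => γ' (cl t) / γ (cl t) := by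
      apply Continuous.div (hγ'c.comp continuous_cl) (hγc.comp continuous_cl)
      intro t; exact h0 _
    rw [continuous_iff_continuousAt]
    intro t
    exact ContinuousAt.comp (g := Complex.arg)
      (Complex.continuousAt_arg (Or.inl (hre t))) hcont.continuousAt
  · intro t ht
    show γ' t = (‖γ' t‖ : ℂ) *
      Complex.exp ((((θ t + Complex.arg (γ' (cl t) / γ (cl t))) : ℝ) : ℂ) * I)
    rw [cl_of_mem ht]
    push_cast
    exact lift_step (h0 t) (h0' t) (hθ t ht)
  · have e0 : cl (0:ℝ) = 0 := cl_of_mem ⟨le_refl 0, zero_le_one⟩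
    have e1 : cl (1:ℝ) = 1 := cl_of_mem ⟨zero_le_one, le_refl 1⟩
    show w = (θ 1 + Complex.arg (γ' (cl 1) / γ (cl 1))) -
      (θ 0 + Complex.arg (γ' (cl 0) / γ (cl 0)))
    rw [e0, e1, ← hloop, ← hloop']
    rw [hw]; ring

/-- confinement lemma via IVT -/
lemma confine {g : ℝ → ℝ} (hg : Continuous g) {a b : ℝ} (hab : a ≤ b)
    (h0 : g a ∈ Icc 0 (Real.pi / 2))
    (hsign : ∀ t ∈ Icc a b, 0 ≤ Real.cos (g t) ∧ 0 ≤ Real.sin (g t)) :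
    ∀ t ∈ Icc a b, g t ∈ Icc 0 (Real.pi / 2) := by
  intro t ht
  have hpi := Real.pi_pos
  by_contra hout
  simp only [mem_Icc, not_and_or, not_le] at hout
  rcases hout with hlt | hgt
  · -- g t < 0 : find s with g s = max (g t) (-π/2) ∈ [-π/2, 0)
    have hc1 : max (g t) (-(Real.pi/2)) ∈ Icc (g t) (g a) := by
      constructor
      · exact le_max_left _ _
      · apply max_le (le_of_lt (lt_of_lt_of_le hlt h0.1))
        linarith [h0.1]
    obtain ⟨s, hs, hgs⟩ := intermediate_value_Icc' ht.1 hg.continuousOn hc1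
    have hsmem : s ∈ Icc a b := ⟨hs.1, le_trans hs.2 ht.2⟩
    have hsin : Real.sin (g s) < 0 := by
      apply Real.sin_neg_of_neg_of_neg_pi_lt
      · rw [hgs]; exact max_lt hlt (by linarith)
      · rw [hgs]; apply lt_of_lt_of_le ?_ (le_max_right _ _); linarith
    linarith [(hsign s hsmem).2]
  · -- g t > π/2 : find s with g s = min (g t) π ∈ (π/2, π]
    have hc1 : min (g t) Real.pi ∈ Icc (g a) (g t) := by
      constructor
      · apply le_min (le_of_lt (lt_of_le_of_lt h0.2 hgt))
        linarith [h0.2]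
      · exact min_le_left _ _
    obtain ⟨s, hs, hgs⟩ := intermediate_value_Icc ht.1 hg.continuousOn hc1
    have hsmem : s ∈ Icc a b := ⟨hs.1, le_trans hs.2 ht.2⟩
    have hcos : Real.cos (g s) < 0 := by
      apply Real.cos_neg_of_pi_div_two_lt_of_lt
      · rw [hgs]; exact lt_min hgt (by linarith)
      · rw [hgs]; apply lt_of_le_of_lt (min_le_right _ _); linarith
    linarith [(hsign s hsmem).1]

lemma cl_eq_zero {x : ℝ} (h : x ≤ 0) : cl x = 0 := by
  simp only [cl]
  rw [min_eq_left (le_trans h zero_le_one), max_eq_left h]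

lemma cl_eq_one {x : ℝ} (h : 1 ≤ x) : cl x = 1 := by
  simp only [cl]
  rw [min_eq_right h, max_eq_right zero_le_one]

lemma re_im_lift {z : ℂ} {x : ℝ}
    (h : z = (‖z‖ : ℂ) * Complex.exp ((x:ℝ) * I)) :
    z.re = ‖z‖ * Real.cos x ∧ z.im = ‖z‖ * Real.sin x := by
  constructor
  · conv_lhs => rw [h]
    simp [Complex.exp_ofReal_mul_I_re]
  · conv_lhs => rw [h]
    simp [Complex.exp_ofReal_mul_I_im]

lemma cos_sin_sign {z : ℂ} {x : ℝ} (hz : z ≠ 0)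
    (h : z = (‖z‖ : ℂ) * Complex.exp ((x:ℝ) * I)) :
    (0 ≤ z.re → 0 ≤ Real.cos x) ∧ (z.re ≤ 0 → Real.cos x ≤ 0) ∧
    (0 ≤ z.im → 0 ≤ Real.sin x) ∧ (z.im ≤ 0 → Real.sin x ≤ 0) := by
  obtain ⟨hre, him⟩ := re_im_lift h
  have hpos : 0 < ‖z‖ := norm_pos_iff.mpr hz
  refine ⟨?_, ?_, ?_, ?_⟩ <;> intro hh <;> nlinarith

/-- pin down a value in a length π/2 window knowing it mod 2π -/
lemma pin_value {x v : ℝ} {k : ℤ} (hv : x = v + 2 * Real.pi * k)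
    (hlo : v - Real.pi / 2 ≤ x ∨ v ≤ x) (hhi : x ≤ v + Real.pi / 2) : x = v := by
  have hpi := Real.pi_pos
  have hk0 : (k:ℝ) = 0 := by
    rcases hlo with hlo | hlo
    · have h1 : -(Real.pi/2) ≤ 2 * Real.pi * k := by linarith
      have h2 : 2 * Real.pi * k ≤ Real.pi / 2 := by linarith
      have hk1 : (-1:ℝ) < (k:ℝ) := by nlinarith
      have hk2 : (k:ℝ) < 1 := by nlinarith
      have : (-1:ℤ) < k := by exact_mod_cast hk1
      have : k < 1 := by exact_mod_cast hk2
      have : k = 0 := by omega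
      exact_mod_cast this
    · have h1 : (0:ℝ) ≤ 2 * Real.pi * k := by linarith
      have h2 : 2 * Real.pi * k ≤ Real.pi / 2 := by linarith
      have hk1 : (-1:ℝ) < (k:ℝ) := by nlinarith
      have hk2 : (k:ℝ) < 1 := by nlinarith
      have : (-1:ℤ) < k := by exact_mod_cast hk1
      have : k < 1 := by exact_mod_cast hk2
      have : k = 0 := by omega
      exact_mod_cast this
  rw [hv, hk0]; ring

lemma lift_shift {z : ℂ} {x : ℝ} (k : ℤ)
    (h : z = (‖z‖ : ℂ) * Complex.exp ((x:ℝ) * I)) :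
    z = (‖z‖ : ℂ) * Complex.exp (((x - 2*Real.pi*k : ℝ) : ℂ) * I) := by
  have h1 : (((x - 2*Real.pi*k : ℝ)) : ℂ) * I = (x:ℂ) * I - (k:ℂ) * (2*(Real.pi:ℂ)*I) := by
    push_cast; ring
  have he : Complex.exp ((((x - 2*Real.pi*k : ℝ)) : ℂ) * I) = Complex.exp ((x:ℂ) * I) := by
    rw [h1, Complex.exp_sub, Complex.exp_int_mul_two_pi_mul_I, div_one]
  rw [he]
  exact h

lemma exp_neg_pi_div_two : Complex.exp ((↑(-(Real.pi/2)):ℂ) * I) = -I := by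
  apply Complex.ext
  · rw [Complex.exp_ofReal_mul_I_re]
    simp [Real.cos_pi_div_two]
  · rw [Complex.exp_ofReal_mul_I_im]
    simp [Real.sin_pi_div_two]

lemma exp_zero_mul_I : Complex.exp ((↑(0:ℝ):ℂ) * I) = 1 := by simp

lemma exp_pi_div_two : Complex.exp ((↑(Real.pi/2):ℂ) * I) = I := by
  apply Complex.ext
  · rw [Complex.exp_ofReal_mul_I_re]
    simp [Real.cos_pi_div_two]
  · rw [Complex.exp_ofReal_mul_I_im]
    simp [Real.sin_pi_div_two]

lemma exp_pi_mul_I' : Complex.exp ((↑(Real.pi):ℂ) * I) = -1 := by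
  apply Complex.ext
  · rw [Complex.exp_ofReal_mul_I_re]
    simp [Real.cos_pi]
  · rw [Complex.exp_ofReal_mul_I_im]
    simp [Real.sin_pi]

theorem intersection_point_exists (φ ψ : ℝ → Plane)
    (hφc : ContinuousOn φ (Set.Icc 0 1)) (hψc : ContinuousOn ψ (Set.Icc 0 1))
    (hφm : ∀ t ∈ Set.Icc (0:ℝ) 1, φ t ∈ unitSquare)
    (hψm : ∀ t ∈ Set.Icc (0:ℝ) 1, ψ t ∈ unitSquare)
    (hφ0 : φ 0 = pt 0 0) (hφ1 : φ 1 = pt 1 1)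
    (hψ0 : ψ 0 = pt 0 1) (hψ1 : ψ 1 = pt 1 0) :
    ∃ s ∈ Set.Icc (0:ℝ) 1, ∃ t ∈ Set.Icc (0:ℝ) 1, φ s = ψ t := by
  by_contra hcon
  push_neg at hcon
  have hpi := Real.pi_pos
  -- the complex-valued difference function, clamped
  set F : ℝ → ℝ → ℂ := fun s t =>
    ((φ (cl s) 0 - ψ (cl t) 0 : ℝ) : ℂ) + ((φ (cl s) 1 - ψ (cl t) 1 : ℝ) : ℂ) * I
    with hFdef
  have hFre : ∀ s t, (F s t).re = φ (cl s) 0 - ψ (cl t) 0 := by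
    intro s t; simp [hFdef]
  have hFim : ∀ s t, (F s t).im = φ (cl s) 1 - ψ (cl t) 1 := by
    intro s t; simp [hFdef]
  -- continuity of coordinates
  have hφ'c : Continuous (fun s => φ (cl s)) :=
    hφc.comp_continuous continuous_cl cl_mem
  have hψ'c : Continuous (fun s => ψ (cl s)) :=
    hψc.comp_continuous continuous_cl cl_mem
  have hφ0c : Continuous (fun s => φ (cl s) 0) :=
    (EuclideanSpace.proj (0 : Fin 2)).continuous.comp hφ'c
  have hφ1c : Continuous (fun s => φ (cl s) 1) :=
    (EuclideanSpace.proj (1 : Fin 2)).continuous.comp hφ'c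
  have hψ0c : Continuous (fun s => ψ (cl s) 0) :=
    (EuclideanSpace.proj (0 : Fin 2)).continuous.comp hψ'c
  have hψ1c : Continuous (fun s => ψ (cl s) 1) :=
    (EuclideanSpace.proj (1 : Fin 2)).continuous.comp hψ'c
  have hFc : Continuous (fun p : ℝ × ℝ => F p.1 p.2) := by
    apply Continuous.add
    · exact Complex.continuous_ofReal.comp
        ((hφ0c.comp continuous_fst).sub (hψ0c.comp continuous_snd))
    · exact (Complex.continuous_ofReal.comp
        ((hφ1c.comp continuous_fst).sub (hψ1c.comp continuous_snd))).mul continuous_const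
  -- nonvanishing
  have hFne : ∀ s t, F s t ≠ 0 := by
    intro s t h
    apply hcon (cl s) (cl_mem s) (cl t) (cl_mem t)
    have h1 : (F s t).re = 0 := by rw [h]; simp
    have h2 : (F s t).im = 0 := by rw [h]; simp
    rw [hFre] at h1
    rw [hFim] at h2
    ext i
    fin_cases i
    · simpa using sub_eq_zero.mp h1
    · simpa using sub_eq_zero.mp h2
  -- idempotence under clamping
  have hclF : ∀ s t, F (cl s) (cl t) = F s t := by
    intro s t
    simp only [hFdef, cl_cl]
  -- minimum modulus on the unit square
  have hsq : IsCompact (Icc (0:ℝ) 1 ×ˢ Icc (0:ℝ) 1) := isCompact_Icc.prod isCompact_Icc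
  obtain ⟨p₀, hp₀, hpmin⟩ := hsq.exists_isMinOn
    ⟨((0:ℝ),(0:ℝ)), by constructor <;> exact ⟨le_refl 0, zero_le_one⟩⟩
    ((continuous_norm.comp hFc).continuousOn)
  set m := ‖F p₀.1 p₀.2‖ with hmdef
  have hm : 0 < m := norm_pos_iff.mpr (hFne _ _)
  have hmle : ∀ s t, m ≤ ‖F s t‖ := by
    intro s t
    rw [← hclF]
    have hmem : ((cl s), (cl t)) ∈ Icc (0:ℝ) 1 ×ˢ Icc (0:ℝ) 1 :=
      ⟨cl_mem s, cl_mem t⟩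
    simpa using hpmin hmem
  -- uniform continuity
  have huc := hsq.uniformContinuousOn_of_continuous hFc.continuousOn
  rw [Metric.uniformContinuousOn_iff] at huc
  obtain ⟨δ, hδ, hδ'⟩ := huc m hm
  -- the boundary loop
  set q1 : ℝ → ℝ := fun t => cl (min (4*t) (3 - 4*t)) with hq1def
  set q2 : ℝ → ℝ := fun t => cl (min (4*t - 1) (4 - 4*t)) with hq2def
  have hq1c : Continuous q1 := by
    rw [hq1def]
    exact continuous_cl.comp (Continuous.min (by fun_prop) (by fun_prop))
  have hq2c : Continuous q2 := by
    rw [hq2def]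
    exact continuous_cl.comp (Continuous.min (by fun_prop) (by fun_prop))
  have hq1mem : ∀ t, q1 t ∈ Icc (0:ℝ) 1 := by
    intro t; rw [hq1def]; exact cl_mem _
  have hq2mem : ∀ t, q2 t ∈ Icc (0:ℝ) 1 := by
    intro t; rw [hq2def]; exact cl_mem _
  -- the homotopy
  set H : ℝ → ℝ → ℂ :=
    fun u t => F (1/2 + u*(q1 t - 1/2)) (1/2 + u*(q2 t - 1/2)) with hHdef
  have hHc : ∀ u, Continuous (H u) := by
    intro u
    rw [hHdef]
    apply hFc.comp (Continuous.prodMk ?_ ?_)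
    · fun_prop
    · fun_prop
  have hHne : ∀ u t, H u t ≠ 0 := fun u t => hFne _ _
  -- boundary loop values of q1 q2
  have hq1_0 : ∀ t : ℝ, t ≤ 0 → q1 t = 0 := by
    intro t ht; rw [hq1def]
    exact cl_eq_zero (le_trans (min_le_left _ _) (by linarith))
  have hq2_I : ∀ t : ℝ, t ≤ 1/4 → q2 t = 0 := by
    intro t ht; rw [hq2def]
    exact cl_eq_zero (le_trans (min_le_left _ _) (by linarith))
  have hq1_II : ∀ t : ℝ, 1/4 ≤ t → t ≤ 1/2 → q1 t = 1 := by
    intro t h1 h2; rw [hq1def]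
    exact cl_eq_one (le_min (by linarith) (by linarith))
  have hq2_III : ∀ t : ℝ, 1/2 ≤ t → t ≤ 3/4 → q2 t = 1 := by
    intro t h1 h2; rw [hq2def]
    exact cl_eq_one (le_min (by linarith) (by linarith))
  have hq1_IV : ∀ t : ℝ, 3/4 ≤ t → q1 t = 0 := by
    intro t ht; rw [hq1def]
    exact cl_eq_zero (le_trans (min_le_right _ _) (by linarith))
  have hq2_1 : ∀ t : ℝ, 1 ≤ t → q2 t = 0 := by
    intro t ht; rw [hq2def]
    exact cl_eq_zero (le_trans (min_le_right _ _) (by linarith))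
  -- loop property
  have hHloop : ∀ u, H u 0 = H u 1 := by
    intro u
    rw [hHdef]
    simp only
    rw [hq1_0 0 le_rfl, hq1_IV 1 (by norm_num), hq2_I 0 (by norm_num), hq2_1 1 le_rfl]
  -- corner values of F
  have hcl0 : cl (0:ℝ) = 0 := cl_eq_zero le_rfl
  have hcl1 : cl (1:ℝ) = 1 := cl_eq_one le_rfl
  have hpt00 : (pt 0 0) 0 = (0:ℝ) := rfl
  have hpt01 : (pt 0 0) 1 = (0:ℝ) := rfl
  have hF00 : F 0 0 = -I := by
    rw [hFdef]
    simp only [hcl0, hφ0, hψ0]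
    rw [show (pt 0 0) 0 = (0:ℝ) from rfl, show (pt 0 0) 1 = (0:ℝ) from rfl,
      show (pt 0 1) 0 = (0:ℝ) from rfl, show (pt 0 1) 1 = (1:ℝ) from rfl]
    push_cast
    ring
  have hF10 : F 1 0 = 1 := by
    rw [hFdef]
    simp only [hcl0, hcl1, hφ1, hψ0]
    rw [show (pt 1 1) 0 = (1:ℝ) from rfl, show (pt 1 1) 1 = (1:ℝ) from rfl,
      show (pt 0 1) 0 = (0:ℝ) from rfl, show (pt 0 1) 1 = (1:ℝ) from rfl]
    push_cast
    ring
  have hF11 : F 1 1 = I := by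
    rw [hFdef]
    simp only [hcl1, hφ1, hψ1]
    rw [show (pt 1 1) 0 = (1:ℝ) from rfl, show (pt 1 1) 1 = (1:ℝ) from rfl,
      show (pt 1 0) 0 = (1:ℝ) from rfl, show (pt 1 0) 1 = (0:ℝ) from rfl]
    push_cast
    ring
  have hF01 : F 0 1 = -1 := by
    rw [hFdef]
    simp only [hcl0, hcl1, hφ0, hψ1]
    rw [show (pt 0 0) 0 = (0:ℝ) from rfl, show (pt 0 0) 1 = (0:ℝ) from rfl,
      show (pt 1 0) 0 = (1:ℝ) from rfl, show (pt 1 0) 1 = (0:ℝ) from rfl]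
    push_cast
    ring
  -- winding of the constant loop is 0
  have w0 : Wind (H 0) 0 := by
    refine ⟨fun _ => Complex.arg (F (1/2) (1/2)), continuous_const, ?_, by ring⟩
    intro t ht
    have hH0 : H 0 t = F (1/2) (1/2) := by
      rw [hHdef]; norm_num
    rw [hH0]
    exact (Complex.norm_mul_exp_arg_mul_I _).symm
  -- winding is stable along the homotopy
  have hstep : ∀ u ∈ Icc (0:ℝ) 1, ∀ u' ∈ Icc (0:ℝ) 1, |u - u'| < δ →
      Wind (H u) 0 → Wind (H u') 0 := by
    intro u hu u' hu' hud hw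
    apply wind_congr (hHc u) (hHc u') (hHne u) (hHne u') (hHloop u) (hHloop u') ?_ hw
    intro t _
    have hx1 : (1/2 + u*(q1 t - 1/2)) ∈ Icc (0:ℝ) 1 := by
      obtain ⟨a1, a2⟩ := hq1mem t
      constructor <;> nlinarith [hu.1, hu.2]
    have hx2 : (1/2 + u*(q2 t - 1/2)) ∈ Icc (0:ℝ) 1 := by
      obtain ⟨a1, a2⟩ := hq2mem t
      constructor <;> nlinarith [hu.1, hu.2]
    have hy1 : (1/2 + u'*(q1 t - 1/2)) ∈ Icc (0:ℝ) 1 := by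
      obtain ⟨a1, a2⟩ := hq1mem t
      constructor <;> nlinarith [hu'.1, hu'.2]
    have hy2 : (1/2 + u'*(q2 t - 1/2)) ∈ Icc (0:ℝ) 1 := by
      obtain ⟨a1, a2⟩ := hq2mem t
      constructor <;> nlinarith [hu'.1, hu'.2]
    have hdists : dist ((1/2 + u*(q1 t - 1/2)), (1/2 + u*(q2 t - 1/2)))
        ((1/2 + u'*(q1 t - 1/2)), (1/2 + u'*(q2 t - 1/2))) < δ := by
      rw [Prod.dist_eq]
      apply max_lt
      · rw [Real.dist_eq, show (1/2 + u*(q1 t - 1/2)) - (1/2 + u'*(q1 t - 1/2))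
            = (u - u')*(q1 t - 1/2) by ring, abs_mul]
        obtain ⟨a1, a2⟩ := hq1mem t
        have h2 : |q1 t - 1/2| ≤ 1/2 := abs_le.mpr ⟨by linarith, by linarith⟩
        nlinarith [abs_nonneg (u - u'), abs_nonneg (q1 t - 1/2)]
      · rw [Real.dist_eq, show (1/2 + u*(q2 t - 1/2)) - (1/2 + u'*(q2 t - 1/2))
            = (u - u')*(q2 t - 1/2) by ring, abs_mul]
        obtain ⟨a1, a2⟩ := hq2mem t
        have h2 : |q2 t - 1/2| ≤ 1/2 := abs_le.mpr ⟨by linarith, by linarith⟩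
        nlinarith [abs_nonneg (u - u'), abs_nonneg (q2 t - 1/2)]
    have hdF := hδ' _ ⟨hx1, hx2⟩ _ ⟨hy1, hy2⟩ hdists
    simp only at hdF
    have heq : ‖H u' t - H u t‖ = dist (H u' t) (H u t) :=
      (Complex.dist_eq _ _).symm
    rw [heq, dist_comm]
    calc dist (H u t) (H u' t) < m := by
          rw [hHdef]; exact hdF
      _ ≤ ‖H u t‖ := by rw [hHdef]; exact hmle _ _
  -- the chain
  obtain ⟨n, hn⟩ := exists_nat_one_div_lt hδ
  set N : ℕ := n + 1 with hNdef
  have hNpos : (0:ℝ) < N := by rw [hNdef]; push_cast; positivity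
  have hNδ : 1 / (N:ℝ) < δ := by rw [hNdef]; push_cast; exact hn
  have hchain : ∀ k : ℕ, k ≤ N → Wind (H ((k:ℝ)/(N:ℝ))) 0 := by
    intro k hk
    induction k with
    | zero =>
      have : ((0:ℕ):ℝ)/(N:ℝ) = 0 := by norm_num
      rw [this]
      exact w0
    | succ k ih =>
      have hkN : k ≤ N := le_of_lt (Nat.lt_of_succ_le hk)
      have hprev := ih hkN
      have hkr : (k:ℝ) ≤ N := by exact_mod_cast hkN
      have hkr1 : ((k:ℝ)+1) ≤ N := by exact_mod_cast hk
      have hm1 : (k:ℝ)/(N:ℝ) ∈ Icc (0:ℝ) 1 := by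
        constructor
        · positivity
        · rw [div_le_one hNpos]; linarith
      have hm2 : ((k:ℝ)+1)/(N:ℝ) ∈ Icc (0:ℝ) 1 := by
        constructor
        · positivity
        · rw [div_le_one hNpos]; linarith
      have hdist : |(k:ℝ)/(N:ℝ) - ((k:ℝ)+1)/(N:ℝ)| < δ := by
        rw [div_sub_div_same, show (k:ℝ) - ((k:ℝ)+1) = -1 by ring]
        rw [abs_div, abs_neg, abs_one, abs_of_pos hNpos]
        exact hNδ
      have := hstep _ hm1 _ hm2 hdist hprev
      have hcast : (((k+1:ℕ)):ℝ)/(N:ℝ) = ((k:ℝ)+1)/(N:ℝ) := by push_cast; ring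
      rw [hcast]
      exact this
  have w1 : Wind (H 1) 0 := by
    have := hchain N le_rfl
    rwa [div_self (ne_of_gt hNpos)] at this
  -- explicit form of the boundary loop
  have hγ : ∀ t, H 1 t = F (q1 t) (q2 t) := by
    intro t
    rw [hHdef]
    norm_num
  -- corner values
  have hc0 : H 1 0 = -I := by
    rw [hγ 0, hq1_0 0 le_rfl, hq2_I 0 (by norm_num), hF00]
  have hc14 : H 1 (1/4) = 1 := by
    rw [hγ (1/4), hq1_II (1/4) le_rfl (by norm_num), hq2_I (1/4) le_rfl, hF10]
  have hc12 : H 1 (1/2) = I := by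
    rw [hγ (1/2), hq1_II (1/2) (by norm_num) le_rfl, hq2_III (1/2) le_rfl (by norm_num), hF11]
  have hc34 : H 1 (3/4) = -1 := by
    rw [hγ (3/4), hq1_IV (3/4) le_rfl, hq2_III (3/4) (by norm_num) le_rfl, hF01]
  have hc1 : H 1 1 = -I := by rw [← hHloop 1]; exact hc0
  -- get a lift and normalize it
  obtain ⟨θ, hθc, hθ⟩ := exists_lift (H 1) (hHc 1) (hHne 1)
  have h0mem : (0:ℝ) ∈ Icc (0:ℝ) 1 := ⟨le_refl 0, zero_le_one⟩
  have h14mem : (1/4:ℝ) ∈ Icc (0:ℝ) 1 := by constructor <;> norm_num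
  have h12mem : (1/2:ℝ) ∈ Icc (0:ℝ) 1 := by constructor <;> norm_num
  have h34mem : (3/4:ℝ) ∈ Icc (0:ℝ) 1 := by constructor <;> norm_num
  have h1mem : (1:ℝ) ∈ Icc (0:ℝ) 1 := ⟨zero_le_one, le_refl 1⟩
  have habs0 : ‖H 1 0‖ = 1 := by rw [hc0]; simp
  have hexp0 : Complex.exp ((↑(θ 0):ℂ) * I) = Complex.exp ((↑(-(Real.pi/2)):ℂ) * I) := by
    rw [exp_eq_of_lift (hHne 1 0) (hθ 0 h0mem), hc0, exp_neg_pi_div_two]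
    simp
  obtain ⟨k, hk⟩ := diff_two_pi hexp0
  set Θ : ℝ → ℝ := fun t => θ t - 2*Real.pi*k with hΘdef
  have hΘc : Continuous Θ := by rw [hΘdef]; fun_prop
  have hΘ : ∀ t ∈ Icc (0:ℝ) 1, H 1 t =
      (‖H 1 t‖ : ℂ) * Complex.exp ((↑(Θ t):ℂ) * I) := by
    intro t ht
    exact lift_shift k (hθ t ht)
  have hΘ0 : Θ 0 = -(Real.pi/2) := by rw [hΘdef]; simp only; linarith
  -- pin down successive corner values of Θ
  -- quarter I : [0, 1/4]
  have hsignI : ∀ t ∈ Icc (0:ℝ) (1/4),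
      0 ≤ Real.cos (Θ t + Real.pi/2) ∧ 0 ≤ Real.sin (Θ t + Real.pi/2) := by
    intro t ht
    have ht1 : t ∈ Icc (0:ℝ) 1 := ⟨ht.1, by linarith [ht.2]⟩
    obtain ⟨s1, s2, s3, s4⟩ := cos_sin_sign (hHne 1 t) (hΘ t ht1)
    have hre : 0 ≤ (H 1 t).re := by
      rw [hγ t, hq2_I t ht.2, hFre, hcl0, hψ0]
      rw [show (pt 0 1) 0 = (0:ℝ) from rfl]
      have := (hφm _ (cl_mem (q1 t))).1.1
      linarith
    have him : (H 1 t).im ≤ 0 := by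
      rw [hγ t, hq2_I t ht.2, hFim, hcl0, hψ0]
      rw [show (pt 0 1) 1 = (1:ℝ) from rfl]
      have := (hφm _ (cl_mem (q1 t))).2.2
      linarith
    constructor
    · rw [Real.cos_add_pi_div_two]; linarith [s4 him]
    · rw [Real.sin_add_pi_div_two]; exact s1 hre
  have hconfI := confine (g := fun t => Θ t + Real.pi/2) (by fun_prop)
    (by norm_num : (0:ℝ) ≤ 1/4)
    (by show Θ 0 + Real.pi/2 ∈ Icc 0 (Real.pi/2)
        rw [hΘ0]; constructor <;> linarith) hsignI
  have hΘ14mem : Θ (1/4) ∈ Icc (-(Real.pi/2)) 0 := by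
    have := hconfI (1/4) ⟨by norm_num, le_refl _⟩
    simp only [mem_Icc] at this ⊢
    constructor <;> linarith [this.1, this.2]
  have hΘ14 : Θ (1/4) = 0 := by
    have habs : ‖H 1 (1/4)‖ = 1 := by rw [hc14]; simp
    have hexp : Complex.exp ((↑(Θ (1/4)):ℂ) * I) = Complex.exp ((↑(0:ℝ):ℂ) * I) := by
      rw [exp_eq_of_lift (hHne 1 (1/4)) (hΘ (1/4) h14mem), hc14, exp_zero_mul_I]
      simp
    obtain ⟨k2, hk2⟩ := diff_two_pi hexp
    apply pin_value (k := k2) (by linarith) (Or.inl (by simpa using hΘ14mem.1))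
    linarith [hΘ14mem.2]
  -- quarter II : [1/4, 1/2]
  have hsignII : ∀ t ∈ Icc (1/4:ℝ) (1/2),
      0 ≤ Real.cos (Θ t) ∧ 0 ≤ Real.sin (Θ t) := by
    intro t ht
    have ht1 : t ∈ Icc (0:ℝ) 1 := ⟨by linarith [ht.1], by linarith [ht.2]⟩
    obtain ⟨s1, s2, s3, s4⟩ := cos_sin_sign (hHne 1 t) (hΘ t ht1)
    have hre : 0 ≤ (H 1 t).re := by
      rw [hγ t, hq1_II t ht.1 ht.2, hFre, hcl1, hφ1]
      rw [show (pt 1 1) 0 = (1:ℝ) from rfl]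
      have := (hψm _ (cl_mem (q2 t))).1.2
      linarith
    have him : 0 ≤ (H 1 t).im := by
      rw [hγ t, hq1_II t ht.1 ht.2, hFim, hcl1, hφ1]
      rw [show (pt 1 1) 1 = (1:ℝ) from rfl]
      have := (hψm _ (cl_mem (q2 t))).2.2
      linarith
    exact ⟨s1 hre, s3 him⟩
  have hconfII := confine (g := Θ) hΘc (by norm_num : (1/4:ℝ) ≤ 1/2)
    (by rw [hΘ14]; constructor <;> linarith) hsignII
  have hΘ12mem : Θ (1/2) ∈ Icc 0 (Real.pi/2) := hconfII (1/2) ⟨by norm_num, le_refl _⟩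
  have hΘ12 : Θ (1/2) = Real.pi/2 := by
    have habs : ‖H 1 (1/2)‖ = 1 := by rw [hc12]; simp
    have hexp : Complex.exp ((↑(Θ (1/2)):ℂ) * I)
        = Complex.exp ((↑(Real.pi/2):ℂ) * I) := by
      rw [exp_eq_of_lift (hHne 1 (1/2)) (hΘ (1/2) h12mem), hc12, exp_pi_div_two]
      simp
    obtain ⟨k2, hk2⟩ := diff_two_pi hexp
    apply pin_value (k := k2) (by linarith) (Or.inl (by linarith [hΘ12mem.1]))
    linarith [hΘ12mem.2]
  -- quarter III : [1/2, 3/4]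
  have hsignIII : ∀ t ∈ Icc (1/2:ℝ) (3/4),
      0 ≤ Real.cos (Θ t - Real.pi/2) ∧ 0 ≤ Real.sin (Θ t - Real.pi/2) := by
    intro t ht
    have ht1 : t ∈ Icc (0:ℝ) 1 := ⟨by linarith [ht.1], by linarith [ht.2]⟩
    obtain ⟨s1, s2, s3, s4⟩ := cos_sin_sign (hHne 1 t) (hΘ t ht1)
    have hre : (H 1 t).re ≤ 0 := by
      rw [hγ t, hq2_III t ht.1 ht.2, hFre, hcl1, hψ1]
      rw [show (pt 1 0) 0 = (1:ℝ) from rfl]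
      have := (hφm _ (cl_mem (q1 t))).1.2
      linarith
    have him : 0 ≤ (H 1 t).im := by
      rw [hγ t, hq2_III t ht.1 ht.2, hFim, hcl1, hψ1]
      rw [show (pt 1 0) 1 = (0:ℝ) from rfl]
      have := (hφm _ (cl_mem (q1 t))).2.1
      linarith
    constructor
    · rw [Real.cos_sub_pi_div_two]; exact s3 him
    · rw [Real.sin_sub_pi_div_two]; linarith [s2 hre]
  have hconfIII := confine (g := fun t => Θ t - Real.pi/2) (by fun_prop)
    (by norm_num : (1/2:ℝ) ≤ 3/4)
    (by show Θ (1/2) - Real.pi/2 ∈ Icc 0 (Real.pi/2)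
        rw [hΘ12]; constructor <;> linarith) hsignIII
  have hΘ34mem : Θ (3/4) ∈ Icc (Real.pi/2) Real.pi := by
    have := hconfIII (3/4) ⟨by norm_num, le_refl _⟩
    simp only [mem_Icc] at this ⊢
    constructor <;> linarith [this.1, this.2]
  have hΘ34 : Θ (3/4) = Real.pi := by
    have habs : ‖H 1 (3/4)‖ = 1 := by rw [hc34]; simp
    have hexp : Complex.exp ((↑(Θ (3/4)):ℂ) * I)
        = Complex.exp ((↑(Real.pi):ℂ) * I) := by
      rw [exp_eq_of_lift (hHne 1 (3/4)) (hΘ (3/4) h34mem), hc34, exp_pi_mul_I']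
      simp
    obtain ⟨k2, hk2⟩ := diff_two_pi hexp
    apply pin_value (k := k2) (by linarith) (Or.inl (by linarith [hΘ34mem.1]))
    linarith [hΘ34mem.2]
  -- quarter IV : [3/4, 1]
  have hsignIV : ∀ t ∈ Icc (3/4:ℝ) 1,
      0 ≤ Real.cos (Θ t - Real.pi) ∧ 0 ≤ Real.sin (Θ t - Real.pi) := by
    intro t ht
    have ht1 : t ∈ Icc (0:ℝ) 1 := ⟨by linarith [ht.1], ht.2⟩
    obtain ⟨s1, s2, s3, s4⟩ := cos_sin_sign (hHne 1 t) (hΘ t ht1)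
    have hre : (H 1 t).re ≤ 0 := by
      rw [hγ t, hq1_IV t ht.1, hFre, hcl0, hφ0]
      rw [show (pt 0 0) 0 = (0:ℝ) from rfl]
      have := (hψm _ (cl_mem (q2 t))).1.1
      linarith
    have him : (H 1 t).im ≤ 0 := by
      rw [hγ t, hq1_IV t ht.1, hFim, hcl0, hφ0]
      rw [show (pt 0 0) 1 = (0:ℝ) from rfl]
      have := (hψm _ (cl_mem (q2 t))).2.1
      linarith
    constructor
    · rw [Real.cos_sub_pi]; linarith [s2 hre]
    · rw [Real.sin_sub_pi]; linarith [s4 him]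
  have hconfIV := confine (g := fun t => Θ t - Real.pi) (by fun_prop)
    (by norm_num : (3/4:ℝ) ≤ 1)
    (by show Θ (3/4) - Real.pi ∈ Icc 0 (Real.pi/2)
        rw [hΘ34]; constructor <;> linarith) hsignIV
  have hΘ1mem : Θ 1 ∈ Icc Real.pi (Real.pi + Real.pi/2) := by
    have := hconfIV 1 ⟨by norm_num, le_refl _⟩
    simp only [mem_Icc] at this ⊢
    constructor <;> linarith [this.1, this.2]
  have hΘ1 : Θ 1 = Real.pi + Real.pi/2 := by
    have habs : ‖H 1 1‖ = 1 := by rw [hc1]; simp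
    have hexp : Complex.exp ((↑(Θ 1):ℂ) * I)
        = Complex.exp ((↑(-(Real.pi/2)):ℂ) * I) := by
      rw [exp_eq_of_lift (hHne 1 1) (hΘ 1 h1mem), hc1, exp_neg_pi_div_two]
      simp
    obtain ⟨k2, hk2⟩ := diff_two_pi hexp
    obtain ⟨hmm1, hmm2⟩ := hΘ1mem
    apply pin_value (k := k2 - 1) (by push_cast; linear_combination hk2)
      (Or.inl (by rw [show Real.pi + Real.pi/2 - Real.pi/2 = Real.pi by ring]; exact hmm1))
    linarith
  -- conclude
  have w2pi : Wind (H 1) (2 * Real.pi) := by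
    refine ⟨Θ, hΘc, hΘ, ?_⟩
    rw [hΘ1, hΘ0]
    ring
  have : (2 * Real.pi) = 0 := wind_unique (fun t _ => hHne 1 t) w2pi w1
  linarith

end AuxWinding

end
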